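/- An abstract version of Theorem 1: let A = (Q, Σ, δ, q₀) be a finite-state automaton and let F : Σ × H → H, h₀ ∈ H be any dynamical system such that the map sending each cycle-free-or-single-cycle input sequence (length ≤ |Q|) to its final F-state is injective. Then the classifier c defined on these finitely many states by c(final F-state of sequence x̄) = Δ_A(x̄) (the automaton state reached by x̄), extended by 0 elsewhere, makes the RMM built from (F, h₀, c) satisfy a_t = q_t for all t on every input sequence, where q_t is the automaton state sequence. -/

import Mathlib

/-- The full state of a reservoir memory machine: current state `h`, last
selected memory address `a` (`0` means "no memory access"), and the memory
contents (`none` = empty slot). -/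
structure RMMState (H : Type*) where
  h : H
  a : ℕ
  mem : ℕ → Option H

/-- One step of the RMM dynamics (Equation 2 of the paper):
`h̃ = F(x, h)`, `a = c(h̃)`; if `a > 0` and slot `a` is empty, `h̃` is written
to slot `a`; the new state is `h̃` if `a = 0` and the content of slot `a`
otherwise. -/
def rmmStep {X H : Type*} (F : X → H → H) (c : H → ℕ)
    (s : RMMState H) (x : X) : RMMState H :=
  let ht := F x s.h
  let a := c ht
  let mem' : ℕ → Option H :=
    fun l => if l = a ∧ a ≠ 0 ∧ (s.mem a).isNone then some ht else s.mem l
  { h := if a = 0 then ht else (mem' a).getD ht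
    a := a
    mem := mem' }

/-- The initial RMM state: memory empty, except that `h₀` is stored at
address `c(h₀)` if `c(h₀) > 0`. -/
def rmmInit {H : Type*} (c : H → ℕ) (h₀ : H) : RMMState H :=
  { h := h₀
    a := c h₀
    mem := fun l => if l = c h₀ ∧ c h₀ ≠ 0 then some h₀ else none }

/-- The RMM state sequence driven by the input sequence `x 1, x 2, …`. -/
def rmmSeq {X H : Type*} (F : X → H → H) (c : H → ℕ) (h₀ : H)
    (x : ℕ → X) : ℕ → RMMState H
  | 0 => rmmInit c h₀
  | t + 1 => rmmStep F c (rmmSeq F c h₀ x t) (x (t + 1))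

/-- The RMM state after processing a finite input sequence. -/
def rmmRun {X H : Type*} (F : X → H → H) (c : H → ℕ) (h₀ : H)
    (xs : List X) : RMMState H :=
  xs.foldl (rmmStep F c) (rmmInit c h₀)

/-- The pure reservoir run (no memory). -/
def resRun {X H : Type*} (F : X → H → H) (h₀ : H) (xs : List X) : H :=
  xs.foldl (fun h x => F x h) h₀

/-- The iterated state of a Moore machine / finite automaton. -/
def mooreRun {σ Q : Type*} (δ : σ → Q → Q) (q₀ : Q) (xs : List σ) : Q :=
  xs.foldl (fun q x => δ x q) q₀

/-- The sequences in `∪_q (X₀(q) ∪ X₁(q))`: sequences of length at most `L`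
whose proper prefixes visit pairwise distinct automaton states (cycle-free,
or ending with exactly one repetition at the final position). -/
def GoodSeq {σ : Type*} (L : ℕ) (δ : σ → Fin L → Fin L) (q₀ : Fin L)
    (xs : List σ) : Prop :=
  xs.length ≤ L ∧
    Function.Injective (fun i : Fin xs.length => mooreRun δ q₀ (xs.take i))

open Classical in
/-- The classifier of Theorem 1: on the reservoir state of a
cycle-free-or-single-cycle sequence `x̄` it outputs the automaton state
`Δ_A(x̄)` (as the number `Δ_A(x̄)+1 ∈ {1,…,L}`), and `0` elsewhere. -/
noncomputable def mooreCls {σ H : Type*} (L : ℕ)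
    (δ : σ → Fin L → Fin L) (q₀ : Fin L)
    (F : σ → H → H) (h₀ : H) (h : H) : ℕ :=
  if hx : ∃ xs : List σ, GoodSeq L δ q₀ xs ∧ resRun F h₀ xs = h then
    (mooreRun δ q₀ hx.choose).val + 1
  else 0

section Aux

variable {σ H : Type*} {L : ℕ}

theorem rmmStep_a' (F : σ → H → H) (c : H → ℕ) (s : RMMState H) (x : σ) :
    (rmmStep F c s x).a = c (F x s.h) := rfl

theorem rmmStep_mem' (F : σ → H → H) (c : H → ℕ) (s : RMMState H) (x : σ) (l : ℕ) :
    (rmmStep F c s x).mem l =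
      if l = c (F x s.h) ∧ c (F x s.h) ≠ 0 ∧ (s.mem (c (F x s.h))).isNone
      then some (F x s.h) else s.mem l := rfl

theorem rmmStep_h' (F : σ → H → H) (c : H → ℕ) (s : RMMState H) (x : σ) :
    (rmmStep F c s x).h =
      if c (F x s.h) = 0 then F x s.h
      else ((rmmStep F c s x).mem (c (F x s.h))).getD (F x s.h) := rfl

theorem rmmRun_concat (F : σ → H → H) (c : H → ℕ) (h₀ : H) (p : List σ) (x : σ) :
    rmmRun F c h₀ (p ++ [x]) = rmmStep F c (rmmRun F c h₀ p) x := by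
  simp [rmmRun]

theorem resRun_concat (F : σ → H → H) (h₀ : H) (p : List σ) (x : σ) :
    resRun F h₀ (p ++ [x]) = F x (resRun F h₀ p) := by
  simp [resRun]

theorem mooreRun_concat (δ : σ → Fin L → Fin L) (q₀ : Fin L) (p : List σ) (x : σ) :
    mooreRun δ q₀ (p ++ [x]) = δ x (mooreRun δ q₀ p) := by
  simp [mooreRun]

/-- Strongly cycle-free: all prefix states, including the final one, are
pairwise distinct. -/
def CF (δ : σ → Fin L → Fin L) (q₀ : Fin L) (xs : List σ) : Prop :=
  Function.Injective fun i : Fin (xs.length + 1) => mooreRun δ q₀ (xs.take i)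

theorem CF.len_lt {δ : σ → Fin L → Fin L} {q₀ : Fin L} {xs : List σ}
    (h : CF δ q₀ xs) : xs.length + 1 ≤ L := by
  simpa using Fintype.card_le_of_injective _ h

theorem CF.good_concat {δ : σ → Fin L → Fin L} {q₀ : Fin L} {xs : List σ}
    (h : CF δ q₀ xs) (x : σ) : GoodSeq L δ q₀ (xs ++ [x]) := by
  have hlen : (xs ++ [x]).length = xs.length + 1 := by simp
  refine ⟨by rw [hlen]; exact h.len_lt, ?_⟩
  intro i j hij
  have hi : (i : ℕ) ≤ xs.length := Nat.lt_succ_iff.mp (lt_of_lt_of_eq i.2 hlen)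
  have hj : (j : ℕ) ≤ xs.length := Nat.lt_succ_iff.mp (lt_of_lt_of_eq j.2 hlen)
  simp only at hij
  rw [List.take_append_of_le_length hi, List.take_append_of_le_length hj] at hij
  have := h (a₁ := ⟨i, Nat.lt_succ_of_le hi⟩) (a₂ := ⟨j, Nat.lt_succ_of_le hj⟩) hij
  exact Fin.ext (by simpa using this)

theorem cls_eval {δ : σ → Fin L → Fin L} {q₀ : Fin L} {F : σ → H → H} {h₀ : H}
    (hsep : ∀ xs ys : List σ, GoodSeq L δ q₀ xs → GoodSeq L δ q₀ ys →
      resRun F h₀ xs = resRun F h₀ ys → xs = ys)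
    {zs : List σ} (hz : GoodSeq L δ q₀ zs) :
    mooreCls L δ q₀ F h₀ (resRun F h₀ zs) = (mooreRun δ q₀ zs).val + 1 := by
  have hx : ∃ xs : List σ, GoodSeq L δ q₀ xs ∧ resRun F h₀ xs = resRun F h₀ zs :=
    ⟨zs, hz, rfl⟩
  rw [mooreCls, dif_pos hx]
  obtain ⟨h1, h2⟩ := hx.choose_spec
  rw [hsep _ _ h1 hz h2]

theorem main_inv {δ : σ → Fin L → Fin L} {q₀ : Fin L} {F : σ → H → H} {h₀ : H}
    (hsep : ∀ xs ys : List σ, GoodSeq L δ q₀ xs → GoodSeq L δ q₀ ys →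
      resRun F h₀ xs = resRun F h₀ ys → xs = ys) (p : List σ) :
    ∃ g : Fin L → Option (List σ),
      (∀ q ys, g q = some ys → CF δ q₀ ys ∧ mooreRun δ q₀ ys = q ∧
        ∀ i ≤ ys.length, (g (mooreRun δ q₀ (ys.take i))).isSome) ∧
      (∀ q : Fin L, (rmmRun F (mooreCls L δ q₀ F h₀) h₀ p).mem (q.val + 1)
         = (g q).map (resRun F h₀)) ∧
      (∃ ys, g (mooreRun δ q₀ p) = some ys ∧
         (rmmRun F (mooreCls L δ q₀ F h₀) h₀ p).h = resRun F h₀ ys) ∧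
      (rmmRun F (mooreCls L δ q₀ F h₀) h₀ p).a = (mooreRun δ q₀ p).val + 1 := by
  induction p using List.reverseRecOn with
  | nil =>
    have hgoodnil : GoodSeq L δ q₀ ([] : List σ) :=
      ⟨Nat.zero_le _, fun i => i.elim0⟩
    have hc0 : mooreCls L δ q₀ F h₀ h₀ = q₀.val + 1 := by
      have := cls_eval hsep hgoodnil
      simpa [resRun, mooreRun] using this
    refine ⟨fun r => if r = q₀ then some [] else none, ?_, ?_, ?_, ?_⟩
    · intro r ys hr
      by_cases hrq : r = q₀
      · subst hrq
        simp at hr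
        subst hr
        refine ⟨?_, by simp [mooreRun], ?_⟩
        · intro i j _
          have h1 := i.2
          have h2 := j.2
          simp only [List.length_nil, Nat.zero_add, Nat.lt_one_iff] at h1 h2
          exact Fin.ext (h1.trans h2.symm)
        · intro i hi
          simp only [List.length_nil, Nat.le_zero] at hi
          subst hi
          simp [mooreRun]
      · simp [hrq] at hr
    · intro r
      show (rmmInit (mooreCls L δ q₀ F h₀) h₀).mem (r.val + 1) = _
      rw [rmmInit]
      by_cases hrq : r = q₀
      · simp [hrq, hc0, resRun]
      · have : r.val + 1 ≠ q₀.val + 1 := fun h =>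
          hrq (Fin.ext (Nat.succ_injective h))
        simp [hc0, this, hrq]
        exact fun h => hrq (Fin.ext h)
    · exact ⟨[], by simp [mooreRun], rfl⟩
    · show (rmmInit (mooreCls L δ q₀ F h₀) h₀).a = _
      rw [rmmInit]
      simpa [mooreRun] using hc0
  | append_singleton p x ih =>
    obtain ⟨g, hA, hB, ⟨ys, hgys, hh⟩, _hD⟩ := ih
    obtain ⟨hCF, hmr, hpc⟩ := hA _ ys hgys
    set s := rmmRun F (mooreCls L δ q₀ F h₀) h₀ p with hs
    set q' := mooreRun δ q₀ (p ++ [x]) with hq'def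
    have hq'' : q' = δ x (mooreRun δ q₀ p) := mooreRun_concat δ q₀ p x
    have hF : F x s.h = resRun F h₀ (ys ++ [x]) := by
      rw [hh, resRun_concat]
    have hmtop : mooreRun δ q₀ (ys ++ [x]) = q' := by
      rw [mooreRun_concat, hmr, hq'']
    have hgood : GoodSeq L δ q₀ (ys ++ [x]) := hCF.good_concat x
    have hcval : mooreCls L δ q₀ F h₀ (F x s.h) = q'.val + 1 := by
      rw [hF, cls_eval hsep hgood, hmtop]
    rw [rmmRun_concat, ← hs]
    cases hgq' : g q' with
    | some zs =>
      have hmemq' : s.mem (q'.val + 1) = some (resRun F h₀ zs) := by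
        rw [hB, hgq']; rfl
      have hmem : ∀ l, (rmmStep F (mooreCls L δ q₀ F h₀) s x).mem l = s.mem l := by
        intro l
        rw [rmmStep_mem', hcval]
        simp [hmemq']
      refine ⟨g, hA, fun r => by rw [hmem]; exact hB r, ⟨zs, hgq', ?_⟩, ?_⟩
      · rw [rmmStep_h', hcval, hmem, hmemq']
        simp
      · rw [rmmStep_a', hcval]
    | none =>
      have hmemq' : s.mem (q'.val + 1) = none := by
        rw [hB, hgq']; rfl
      have hmem : ∀ l, (rmmStep F (mooreCls L δ q₀ F h₀) s x).mem l =
          if l = q'.val + 1 then some (resRun F h₀ (ys ++ [x])) else s.mem l := by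
        intro l
        rw [rmmStep_mem', hcval, hF]
        by_cases hl : l = q'.val + 1 <;> simp [hl, hmemq']
      have hq'new : ∀ i ≤ ys.length, mooreRun δ q₀ (ys.take i) ≠ q' := by
        intro i hi heq
        have := hpc i hi
        rw [heq, hgq'] at this
        simp at this
      have hCF' : CF δ q₀ (ys ++ [x]) := by
        intro i j hij
        have hlen : (ys ++ [x]).length = ys.length + 1 := by simp
        have hi : (i : ℕ) ≤ ys.length + 1 := by
          have h2 : (i : ℕ) < (ys ++ [x]).length + 1 := i.2
          omega
        have hj : (j : ℕ) ≤ ys.length + 1 := by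
          have h2 : (j : ℕ) < (ys ++ [x]).length + 1 := j.2
          omega
        have hval : ∀ k : ℕ, k ≤ ys.length →
            mooreRun δ q₀ ((ys ++ [x]).take k) = mooreRun δ q₀ (ys.take k) := by
          intro k hk
          rw [List.take_append_of_le_length hk]
        have hvtop : mooreRun δ q₀ ((ys ++ [x]).take (ys.length + 1)) = q' := by
          rw [List.take_of_length_le (by simp), hmtop]
        simp only at hij
        apply Fin.ext
        by_cases hi' : (i : ℕ) ≤ ys.length <;> by_cases hj' : (j : ℕ) ≤ ys.length
        · rw [hval i hi', hval j hj'] at hij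
          have := hCF (a₁ := ⟨i, Nat.lt_succ_of_le hi'⟩)
            (a₂ := ⟨j, Nat.lt_succ_of_le hj'⟩) hij
          simpa using this
        · have hj1 : (j : ℕ) = ys.length + 1 := by omega
          rw [hval i hi', hj1, hvtop] at hij
          exact absurd hij (hq'new i hi')
        · have hi1 : (i : ℕ) = ys.length + 1 := by omega
          rw [hval j hj', hi1, hvtop] at hij
          exact absurd hij.symm (hq'new j hj')
        · omega
      refine ⟨Function.update g q' (some (ys ++ [x])), ?_, ?_, ?_, ?_⟩
      · intro r zs hr
        by_cases hrq : r = q'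
        · subst hrq
          rw [Function.update_self, Option.some.injEq] at hr
          subst hr
          refine ⟨hCF', hmtop, ?_⟩
          intro i hi
          by_cases hst : mooreRun δ q₀ ((ys ++ [x]).take i) = q'
          · rw [hst, Function.update_self]; rfl
          · rw [Function.update_of_ne hst]
            have hlen : (ys ++ [x]).length = ys.length + 1 := by simp
            rw [hlen] at hi
            by_cases hi' : i ≤ ys.length
            · rw [List.take_append_of_le_length hi']
              rw [List.take_append_of_le_length hi'] at hst
              exact hpc i hi'
            · exfalso
              have hi1 : i = ys.length + 1 := by omega
              rw [hi1, List.take_of_length_le (by simp), hmtop] at hst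
              exact hst rfl
        · rw [Function.update_of_ne hrq] at hr
          obtain ⟨h1, h2, h3⟩ := hA r zs hr
          refine ⟨h1, h2, ?_⟩
          intro i hi
          by_cases hst : mooreRun δ q₀ (zs.take i) = q'
          · rw [hst, Function.update_self]; rfl
          · rw [Function.update_of_ne hst]
            exact h3 i hi
      · intro r
        rw [hmem]
        by_cases hrq : r = q'
        · subst hrq
          simp [Function.update_self]
        · have : r.val + 1 ≠ q'.val + 1 := fun h =>
            hrq (Fin.ext (Nat.succ_injective h))
          rw [if_neg this, Function.update_of_ne hrq]
          exact hB r
      · refine ⟨ys ++ [x], by rw [Function.update_self], ?_⟩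
        rw [rmmStep_h', hcval, hmem]
        simp
      · rw [rmmStep_a', hcval]

end Aux

/-- Abstract version of Theorem 1: if the map sending each
cycle-free-or-single-cycle input sequence (length ≤ `|Q|`) to its final
reservoir state is injective, then the RMM built from `(F, h₀)` and the
classifier `mooreCls` selects at every step exactly the automaton state:
`a_t = q_t` (encoded as `q_t + 1`) for all `t` on every input sequence. -/
theorem rmm_cls_simulates_automaton {σ H : Type*} (L : ℕ)
    (δ : σ → Fin L → Fin L) (q₀ : Fin L) (F : σ → H → H) (h₀ : H)
    (hsep : ∀ xs ys : List σ, GoodSeq L δ q₀ xs → GoodSeq L δ q₀ ys →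
      resRun F h₀ xs = resRun F h₀ ys → xs = ys) :
    ∀ (xs : List σ) (t : ℕ), t ≤ xs.length →
      (rmmRun F (mooreCls L δ q₀ F h₀) h₀ (xs.take t)).a
        = (mooreRun δ q₀ (xs.take t)).val + 1 := by
  intro xs t _
  obtain ⟨g, _, _, _, hD⟩ := main_inv hsep (xs.take t)
  exact hD
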